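/- arXiv:1805.00374 — 2 statements merged into one kernel-verified Lean document; each statement's English description precedes it below -/
import Mathlib

section
/- Let f : K → L be a morphism of bicomplexes and r ≥ 0. The following are equivalent: (1) ZW_k(f) is surjective for all 0 ≤ k ≤ r; (2) Z_k(f) is surjective for all 0 ≤ k ≤ r; (3) E_k(f) is surjective for all 0 ≤ k ≤ r. -/
open scoped Classical

/-- A bicomplex of `R`-modules, with commuting differentials `d0` of bidegree `(0,1)`
and `d1` of bidegree `(-1,0)`, encoded in "all indices" form: `d0 i j i' j'` is the
component `X i j → X i' j'`, which vanishes unless `(i',j') = (i, j+1)`, and similarly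
`d1` vanishes unless `(i',j') = (i-1, j)`. -/
structure Bicomplex (R : Type) [CommRing R] where
  X : ℤ → ℤ → Type
  [addgrp : ∀ i j, AddCommGroup (X i j)]
  [mod : ∀ i j, Module R (X i j)]
  d0 : ∀ i j i' j', X i j →ₗ[R] X i' j'
  d1 : ∀ i j i' j', X i j →ₗ[R] X i' j'
  d0_ne : ∀ i j i' j', ¬(i' = i ∧ j' = j + 1) → d0 i j i' j' = 0
  d1_ne : ∀ i j i' j', ¬(i' = i - 1 ∧ j' = j) → d1 i j i' j' = 0
  d0_sq : ∀ i j i'' j'' x, d0 i (j+1) i'' j'' (d0 i j i (j+1) x) = 0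
  d1_sq : ∀ i j i'' j'' x, d1 (i-1) j i'' j'' (d1 i j (i-1) j x) = 0
  comm : ∀ i j i'' j'' x,
    d0 (i-1) j i'' j'' (d1 i j (i-1) j x) = d1 i (j+1) i'' j'' (d0 i j i (j+1) x)

attribute [instance] Bicomplex.addgrp Bicomplex.mod

variable {R : Type} [CommRing R]

/-- Transport an element of `A.X i j` along equalities of the indices. -/
def Bicomplex.cst (A : Bicomplex R) {i j i' j' : ℤ} (h1 : i = i') (h2 : j = j')
    (x : A.X i j) : A.X i' j' := cast (by rw [h1, h2]) x

/-- Morphisms of bicomplexes. -/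
structure BicomplexHom (K L : Bicomplex R) where
  f : ∀ i j, K.X i j →ₗ[R] L.X i j
  comm0 : ∀ i j i' j' x, f i' j' (K.d0 i j i' j' x) = L.d0 i j i' j' (f i j x)
  comm1 : ∀ i j i' j' x, f i' j' (K.d1 i j i' j' x) = L.d1 i j i' j' (f i j x)

def BicomplexHom.comp {K L M : Bicomplex R} (g : BicomplexHom L M) (φ : BicomplexHom K L) :
    BicomplexHom K M where
  f := fun i j => (g.f i j).comp (φ.f i j)
  comm0 := by intro i j i' j' x; simp [LinearMap.comp_apply, φ.comm0, g.comm0]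
  comm1 := by intro i j i' j' x; simp [LinearMap.comp_apply, φ.comm1, g.comm1]

def BicomplexHom.id' (K : Bicomplex R) : BicomplexHom K K :=
  ⟨fun _ _ => LinearMap.id, fun _ _ _ _ _ => rfl, fun _ _ _ _ _ => rfl⟩

def BicomplexHom.zero (K L : Bicomplex R) : BicomplexHom K L :=
  ⟨fun _ _ => 0, by intro i j i' j' x; simp, by intro i j i' j' x; simp⟩

/-- Tuples `(a_0, …, a_{m-1})` with `a_k ∈ A^{P-k, Q-k}` (a staircase of entries). -/
def ZWTuple (A : Bicomplex R) (m : ℕ) (P Q : ℤ) :=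
  ∀ k : Fin m, A.X (P - (k.1:ℤ)) (Q - (k.1:ℤ))

/-- The witness chain conditions `d_1 a_k = d_0 a_{k+1}`. -/
def WChain (A : Bicomplex R) (m : ℕ) (P Q : ℤ) (b : ZWTuple A m P Q) : Prop :=
  ∀ (k : ℕ) (h : k + 1 < m),
    A.d1 (P - ((k:ℕ):ℤ)) (Q - ((k:ℕ):ℤ)) (P - ((k+1:ℕ):ℤ)) (Q - ((k:ℕ):ℤ))
        (b ⟨k, Nat.lt_of_succ_lt h⟩) =
      A.d0 (P - ((k+1:ℕ):ℤ)) (Q - ((k+1:ℕ):ℤ)) (P - ((k+1:ℕ):ℤ)) (Q - ((k:ℕ):ℤ))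
        (b ⟨k+1, h⟩)

/-- `b` is a witness `m`-cycle: `d_0 b_0 = 0` and `d_1 b_k = d_0 b_{k+1}`.
This is the set `ZW_m^{P,Q}(A)` (for `m ≥ 1`). -/
def IsZWT (A : Bicomplex R) (m : ℕ) (P Q : ℤ) (b : ZWTuple A m P Q) : Prop :=
  (∀ h : 0 < m,
    A.d0 (P - ((0:ℕ):ℤ)) (Q - ((0:ℕ):ℤ)) (P - ((0:ℕ):ℤ)) (Q - ((0:ℕ):ℤ) + 1) (b ⟨0, h⟩) = 0)
  ∧ WChain A m P Q b

/-- `(x, t)` is a witness `(m+1)`-cycle in head/tail form: `x ∈ A^{p,q}` with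
`d_0 x = 0`, and `t = (a_1, …, a_m)` a chain of witnesses with `d_1 x = d_0 a_1`. -/
def IsWit (A : Bicomplex R) (m : ℕ) (p q : ℤ) (x : A.X p q)
    (t : ZWTuple A m (p-1) (q-1)) : Prop :=
  A.d0 p q p (q+1) x = 0 ∧ WChain A m (p-1) (q-1) t ∧
  ∀ h : 0 < m,
    A.d1 p q (p - 1 - ((0:ℕ):ℤ)) (q - 1 - ((0:ℕ):ℤ) + 1) x =
      A.d0 (p - 1 - ((0:ℕ):ℤ)) (q - 1 - ((0:ℕ):ℤ)) (p - 1 - ((0:ℕ):ℤ))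
        (q - 1 - ((0:ℕ):ℤ) + 1) (t ⟨0, h⟩)

/-- `x ∈ Z_r^{p,q}(A)`: the `r`-cycles of the (column-filtration) spectral sequence of a
bicomplex, in the explicit form of Lemma `classical_ss`. -/
def IsZ (A : Bicomplex R) (r : ℕ) (p q : ℤ) (x : A.X p q) : Prop :=
  match r with
  | 0 => True
  | m+1 => ∃ t : ZWTuple A m (p-1) (q-1), IsWit A m p q x t

/-- `x ∈ B_r^{p,q}(A)`: the `r`-boundaries of the (column-filtration) spectral sequence
of a bicomplex, in the explicit form of Lemma `classical_ss`. -/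
def IsB (A : Bicomplex R) (r : ℕ) (p q : ℤ) (x : A.X p q) : Prop :=
  match r with
  | 0 => x = 0
  | 1 => ∃ y : A.X p (q-1), A.d0 p (q-1) p q y = x
  | m+2 => ∃ b : ZWTuple A (m+2) (p+(m:ℤ)+1) (q+(m:ℤ)),
      (A.d0 (p+(m:ℤ)+1 - ((0:ℕ):ℤ)) (q+(m:ℤ) - ((0:ℕ):ℤ)) (p+(m:ℤ)+1 - ((0:ℕ):ℤ))
          (q+(m:ℤ) - ((0:ℕ):ℤ) + 1) (b ⟨0, by omega⟩) = 0)
      ∧ (∀ (k : ℕ) (h : k + 1 ≤ m),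
          A.d1 (p+(m:ℤ)+1 - ((k:ℕ):ℤ)) (q+(m:ℤ) - ((k:ℕ):ℤ)) (p+(m:ℤ)+1 - ((k+1:ℕ):ℤ))
              (q+(m:ℤ) - ((k:ℕ):ℤ)) (b ⟨k, by omega⟩) =
            A.d0 (p+(m:ℤ)+1 - ((k+1:ℕ):ℤ)) (q+(m:ℤ) - ((k+1:ℕ):ℤ))
              (p+(m:ℤ)+1 - ((k+1:ℕ):ℤ)) (q+(m:ℤ) - ((k:ℕ):ℤ)) (b ⟨k+1, by omega⟩))
      ∧ x = A.d0 (p+(m:ℤ)+1 - ((m+1:ℕ):ℤ)) (q+(m:ℤ) - ((m+1:ℕ):ℤ)) p q (b ⟨m+1, by omega⟩)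
          + A.d1 (p+(m:ℤ)+1 - ((m:ℕ):ℤ)) (q+(m:ℤ) - ((m:ℕ):ℤ)) p q (b ⟨m, by omega⟩)

/-- `ZW_r(φ)` is bidegree-wise surjective (`ZW_0 = A`). -/
def ZWSurj {K L : Bicomplex R} (φ : BicomplexHom K L) (r : ℕ) : Prop :=
  match r with
  | 0 => ∀ p q, Function.Surjective (φ.f p q)
  | m+1 => ∀ (P Q : ℤ) (b : ZWTuple L (m+1) P Q), IsZWT L (m+1) P Q b →
      ∃ a : ZWTuple K (m+1) P Q, IsZWT K (m+1) P Q a ∧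
        ∀ k : Fin (m+1), φ.f (P - (k.1:ℤ)) (Q - (k.1:ℤ)) (a k) = b k

/-- `Z_r(φ)` is bidegree-wise surjective. -/
def ZSurj {K L : Bicomplex R} (φ : BicomplexHom K L) (r : ℕ) : Prop :=
  ∀ p q y, IsZ L r p q y → ∃ x, IsZ K r p q x ∧ φ.f p q x = y

/-- `E_r(φ)` is bidegree-wise surjective (elementwise formulation). -/
def ESurj {K L : Bicomplex R} (φ : BicomplexHom K L) (r : ℕ) : Prop :=
  ∀ p q y, IsZ L r p q y → ∃ x, IsZ K r p q x ∧ IsB L r p q (φ.f p q x - y)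

/-- `E_r(φ)` is bidegree-wise injective (elementwise formulation). -/
def EInj {K L : Bicomplex R} (φ : BicomplexHom K L) (r : ℕ) : Prop :=
  ∀ p q x, IsZ K r p q x → IsB L r p q (φ.f p q x) → IsB K r p q x

/-- `φ` is an `E_r`-quasi-isomorphism: `E_{r+1}(φ)` is an isomorphism. -/
def IsErQis {K L : Bicomplex R} (φ : BicomplexHom K L) (r : ℕ) : Prop :=
  ESurj φ (r+1) ∧ EInj φ (r+1)


namespace Bicomplex

variable (A : Bicomplex R)

theorem cst_rfl {i j : ℤ} (h1 : i = i) (h2 : j = j) (x : A.X i j) : A.cst h1 h2 x = x := rfl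

theorem cst_cst {i j i' j' i'' j'' : ℤ} (h1 : i = i') (h2 : j = j') (h1' : i' = i'')
    (h2' : j' = j'') (x : A.X i j) :
    A.cst h1' h2' (A.cst h1 h2 x) = A.cst (h1.trans h1') (h2.trans h2') x := by
  subst h1; subst h2; subst h1'; subst h2'; rfl

theorem cst_zero {i j i' j' : ℤ} (h1 : i = i') (h2 : j = j') :
    A.cst h1 h2 (0 : A.X i j) = 0 := by subst h1; subst h2; rfl

theorem cst_add {i j i' j' : ℤ} (h1 : i = i') (h2 : j = j') (x y : A.X i j) :
    A.cst h1 h2 (x + y) = A.cst h1 h2 x + A.cst h1 h2 y := by subst h1; subst h2; rfl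

theorem cst_sub {i j i' j' : ℤ} (h1 : i = i') (h2 : j = j') (x y : A.X i j) :
    A.cst h1 h2 (x - y) = A.cst h1 h2 x - A.cst h1 h2 y := by subst h1; subst h2; rfl

theorem cst_d0 {i j a b a' b' : ℤ} (h1 : a = a') (h2 : b = b') (x : A.X i j) :
    A.cst h1 h2 (A.d0 i j a b x) = A.d0 i j a' b' x := by subst h1; subst h2; rfl

theorem cst_d1 {i j a b a' b' : ℤ} (h1 : a = a') (h2 : b = b') (x : A.X i j) :
    A.cst h1 h2 (A.d1 i j a b x) = A.d1 i j a' b' x := by subst h1; subst h2; rfl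

theorem d0_cst {i j i' j' a b : ℤ} (h1 : i = i') (h2 : j = j') (x : A.X i j) :
    A.d0 i' j' a b (A.cst h1 h2 x) = A.d0 i j a b x := by subst h1; subst h2; rfl

theorem d1_cst {i j i' j' a b : ℤ} (h1 : i = i') (h2 : j = j') (x : A.X i j) :
    A.d1 i' j' a b (A.cst h1 h2 x) = A.d1 i j a b x := by subst h1; subst h2; rfl

/-- retarget a `d1 = d0` equation. -/
theorem r10 {i j i' j' a b a' b' : ℤ} (h1 : a = a') (h2 : b = b') {x : A.X i j}
    {y : A.X i' j'} (h : A.d1 i j a b x = A.d0 i' j' a b y) :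
    A.d1 i j a' b' x = A.d0 i' j' a' b' y := by subst h1; subst h2; exact h

/-- retarget a `d0 = 0` equation. -/
theorem r0z {i j a b a' b' : ℤ} (h1 : a = a') (h2 : b = b') {x : A.X i j}
    (h : A.d0 i j a b x = 0) : A.d0 i j a' b' x = 0 := by subst h1; subst h2; exact h

theorem gd0_sq {i j a b i'' j'' : ℤ} (h1 : a = i) (h2 : b = j + 1) (x : A.X i j) :
    A.d0 a b i'' j'' (A.d0 i j a b x) = 0 := by subst h1; subst h2; exact A.d0_sq ..

theorem gd1_sq {i j a b i'' j'' : ℤ} (h1 : a = i - 1) (h2 : b = j) (x : A.X i j) :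
    A.d1 a b i'' j'' (A.d1 i j a b x) = 0 := by subst h1; subst h2; exact A.d1_sq ..

theorem gcomm {i j a b c d i'' j'' : ℤ} (h1 : a = i - 1) (h2 : b = j) (h3 : c = i)
    (h4 : d = j + 1) (x : A.X i j) :
    A.d0 a b i'' j'' (A.d1 i j a b x) = A.d1 c d i'' j'' (A.d0 i j c d x) := by
  subst h1; subst h2; subst h3; subst h4; exact A.comm ..

end Bicomplex

theorem BicomplexHom.f_cst {K L : Bicomplex R} (φ : BicomplexHom K L) {i j i' j' : ℤ}
    (h1 : i = i') (h2 : j = j') (x : K.X i j) :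
    φ.f i' j' (K.cst h1 h2 x) = L.cst h1 h2 (φ.f i j x) := by subst h1; subst h2; rfl

/-- head of a nonempty witness tuple -/
def ZWhd (A : Bicomplex R) {m : ℕ} {P Q : ℤ} (b : ZWTuple A (m+1) P Q) : A.X P Q :=
  A.cst (show P - ((0:ℕ):ℤ) = P by omega) (show Q - ((0:ℕ):ℤ) = Q by omega)
    (b ⟨0, Nat.succ_pos m⟩)

/-- tail of a nonempty witness tuple -/
def ZWtl (A : Bicomplex R) {m : ℕ} {P Q : ℤ} (b : ZWTuple A (m+1) P Q) :
    ZWTuple A m (P-1) (Q-1) :=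
  fun k => A.cst (show P - ((k.1+1:ℕ):ℤ) = P - 1 - (k.1:ℤ) by push_cast; ring)
    (show Q - ((k.1+1:ℕ):ℤ) = Q - 1 - (k.1:ℤ) by push_cast; ring) (b ⟨k.1+1, by omega⟩)

/-- assemble a head and tail into a witness tuple -/
def tupleOfWit (A : Bicomplex R) {m : ℕ} {p q : ℤ} (x : A.X p q)
    (t : ZWTuple A m (p-1) (q-1)) : ZWTuple A (m+1) p q :=
  fun k => match k with
  | ⟨0, _⟩ => A.cst (show p = p - ((0:ℕ):ℤ) by omega) (show q = q - ((0:ℕ):ℤ) by omega) x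
  | ⟨n+1, h⟩ => A.cst (show p-1-((n:ℕ):ℤ) = p - ((n+1:ℕ):ℤ) by push_cast; ring)
      (show q-1-((n:ℕ):ℤ) = q - ((n+1:ℕ):ℤ) by push_cast; ring) (t ⟨n, by omega⟩)

example (A : Bicomplex R) {m : ℕ} {p q : ℤ} (x : A.X p q) (t : ZWTuple A m (p-1) (q-1))
    (h : 0 < m+1) : tupleOfWit A x t ⟨0, h⟩
      = A.cst (show p = p - ((0:ℕ):ℤ) by omega) (show q = q - ((0:ℕ):ℤ) by omega) x := rfl

example (A : Bicomplex R) {m n : ℕ} {p q : ℤ} (x : A.X p q) (t : ZWTuple A m (p-1) (q-1))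
    (h : n+1 < m+1) : tupleOfWit A x t ⟨n+1, h⟩
      = A.cst (show p-1-((n:ℕ):ℤ) = p - ((n+1:ℕ):ℤ) by push_cast; ring)
        (show q-1-((n:ℕ):ℤ) = q - ((n+1:ℕ):ℤ) by push_cast; ring) (t ⟨n, by omega⟩) := rfl


theorem isWit_hd_tl (A : Bicomplex R) {m : ℕ} {P Q : ℤ} {b : ZWTuple A (m+1) P Q}
    (hb : IsZWT A (m+1) P Q b) : IsWit A m P Q (ZWhd A b) (ZWtl A b) := by
  obtain ⟨h0, hch⟩ := hb
  refine ⟨?_, ?_, ?_⟩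
  · rw [show ZWhd A b = A.cst (show P - ((0:ℕ):ℤ) = P by omega)
      (show Q - ((0:ℕ):ℤ) = Q by omega) (b ⟨0, Nat.succ_pos m⟩) from rfl, A.d0_cst]
    exact A.r0z (by omega) (by omega) (h0 (Nat.succ_pos m))
  · intro k hk
    rw [show ZWtl A b ⟨k, Nat.lt_of_succ_lt hk⟩
        = A.cst (show P - ((k+1:ℕ):ℤ) = P-1-((k:ℕ):ℤ) by push_cast; ring)
          (show Q - ((k+1:ℕ):ℤ) = Q-1-((k:ℕ):ℤ) by push_cast; ring)
          (b ⟨k+1, by omega⟩) from rfl,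
      show ZWtl A b ⟨k+1, hk⟩
        = A.cst (show P - ((k+1+1:ℕ):ℤ) = P-1-((k+1:ℕ):ℤ) by push_cast; ring)
          (show Q - ((k+1+1:ℕ):ℤ) = Q-1-((k+1:ℕ):ℤ) by push_cast; ring)
          (b ⟨k+1+1, by omega⟩) from rfl, A.d1_cst, A.d0_cst]
    exact A.r10 (by omega) (by omega) (hch (k+1) (by omega))
  · intro hm
    rw [show ZWhd A b = A.cst (show P - ((0:ℕ):ℤ) = P by omega)
      (show Q - ((0:ℕ):ℤ) = Q by omega) (b ⟨0, Nat.succ_pos m⟩) from rfl,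
      show ZWtl A b ⟨0, hm⟩
        = A.cst (show P - ((0+1:ℕ):ℤ) = P-1-((0:ℕ):ℤ) by push_cast; ring)
          (show Q - ((0+1:ℕ):ℤ) = Q-1-((0:ℕ):ℤ) by push_cast; ring)
          (b ⟨0+1, by omega⟩) from rfl, A.d1_cst, A.d0_cst]
    exact A.r10 (by omega) (by omega) (hch 0 (by omega))

theorem isZWT_tupleOfWit (A : Bicomplex R) {m : ℕ} {p q : ℤ} {x : A.X p q}
    {t : ZWTuple A m (p-1) (q-1)} (h : IsWit A m p q x t) :
    IsZWT A (m+1) p q (tupleOfWit A x t) := by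
  obtain ⟨h0, hch, h3⟩ := h
  constructor
  · intro hm
    rw [show tupleOfWit A x t ⟨0, hm⟩ = A.cst (show p = p - ((0:ℕ):ℤ) by omega)
      (show q = q - ((0:ℕ):ℤ) by omega) x from rfl, A.d0_cst]
    exact A.r0z (by omega) (by omega) h0
  · intro k hk
    match k, hk with
    | 0, hk =>
      rw [show tupleOfWit A x t ⟨0, Nat.lt_of_succ_lt hk⟩
          = A.cst (show p = p - ((0:ℕ):ℤ) by omega) (show q = q - ((0:ℕ):ℤ) by omega) x
            from rfl,
        show tupleOfWit A x t ⟨0+1, hk⟩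
          = A.cst (show p-1-((0:ℕ):ℤ) = p - ((0+1:ℕ):ℤ) by push_cast; ring)
            (show q-1-((0:ℕ):ℤ) = q - ((0+1:ℕ):ℤ) by push_cast; ring)
            (t ⟨0, by omega⟩) from rfl, A.d1_cst, A.d0_cst]
      exact A.r10 (by omega) (by omega) (h3 (by omega))
    | n+1, hk =>
      rw [show tupleOfWit A x t ⟨n+1, Nat.lt_of_succ_lt hk⟩
          = A.cst (show p-1-((n:ℕ):ℤ) = p - ((n+1:ℕ):ℤ) by push_cast; ring)
            (show q-1-((n:ℕ):ℤ) = q - ((n+1:ℕ):ℤ) by push_cast; ring)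
            (t ⟨n, by omega⟩) from rfl,
        show tupleOfWit A x t ⟨n+1+1, hk⟩
          = A.cst (show p-1-((n+1:ℕ):ℤ) = p - ((n+1+1:ℕ):ℤ) by push_cast; ring)
            (show q-1-((n+1:ℕ):ℤ) = q - ((n+1+1:ℕ):ℤ) by push_cast; ring)
            (t ⟨n+1, by omega⟩) from rfl, A.d1_cst, A.d0_cst]
      exact A.r10 (by omega) (by omega) (hch n (by omega))


theorem isB_zero (A : Bicomplex R) (k : ℕ) (p q : ℤ) : IsB A k p q 0 := by
  match k with
  | 0 => rfl
  | 1 => exact ⟨0, map_zero _⟩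
  | m+2 =>
    refine ⟨fun _ => 0, map_zero _, fun k h => ?_, ?_⟩
    · rw [map_zero, map_zero]
    · rw [map_zero, map_zero, add_zero]

theorem isZ_sub (A : Bicomplex R) (k : ℕ) (p q : ℤ) {x u : A.X p q}
    (hx : IsZ A k p q x) (hu : IsZ A k p q u) : IsZ A k p q (x - u) := by
  match k with
  | 0 => trivial
  | m+1 =>
    obtain ⟨t, ht0, htch, ht3⟩ := hx
    obtain ⟨s, hs0, hsch, hs3⟩ := hu
    refine ⟨fun k => t k - s k, ?_, ?_, ?_⟩
    · rw [map_sub, ht0, hs0, sub_zero]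
    · intro k hk
      rw [map_sub, map_sub, htch k hk, hsch k hk]
    · intro hm
      rw [map_sub, map_sub, ht3 hm, hs3 hm]

/-- `d1` applied to (a retargeted) `d0` of the last entry of a witness tuple is zero. -/
theorem last_d0 (A : Bicomplex R) {m : ℕ} {P Q : ℤ} {a : ZWTuple A (m+1) P Q}
    (ha : IsZWT A (m+1) P Q a) (a' b' i'' j'' : ℤ)
    (h1 : a' = P - ((m:ℕ):ℤ)) (h2 : b' = Q - ((m:ℕ):ℤ) + 1) :
    A.d1 a' b' i'' j''
      (A.d0 (P - ((m:ℕ):ℤ)) (Q - ((m:ℕ):ℤ)) a' b' (a ⟨m, Nat.lt_succ_self m⟩)) = 0 := by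
  obtain ⟨h0, hch⟩ := ha
  match m with
  | 0 =>
    rw [A.r0z (h1.symm ▸ rfl) (h2.symm ▸ rfl) (h0 (by omega)), map_zero]
  | n+1 =>
    rw [← A.r10 (show P - ((n+1:ℕ):ℤ) = a' by omega) (show Q - ((n:ℕ):ℤ) = b' by omega)
      (hch n (by omega))]
    exact A.gd1_sq (by omega) (by omega) _


theorem zw_to_z {K L : Bicomplex R} (φ : BicomplexHom K L) (k : ℕ) (h : ZWSurj φ k) :
    ZSurj φ k := by
  match k with
  | 0 =>
    intro p q y _
    obtain ⟨x, hx⟩ := h p q y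
    exact ⟨x, trivial, hx⟩
  | m+1 =>
    intro p q y hy
    obtain ⟨t, ht⟩ := hy
    obtain ⟨a, ha, haf⟩ := h p q (tupleOfWit L y t) (isZWT_tupleOfWit L ht)
    refine ⟨ZWhd K a, ⟨ZWtl K a, isWit_hd_tl K ha⟩, ?_⟩
    have e1 : φ.f p q (ZWhd K a)
        = L.cst (show p - ((0:ℕ):ℤ) = p by omega) (show q - ((0:ℕ):ℤ) = q by omega)
          (φ.f (p - ((0:ℕ):ℤ)) (q - ((0:ℕ):ℤ)) (a ⟨0, Nat.succ_pos m⟩)) := φ.f_cst _ _ _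
    rw [e1, haf ⟨0, Nat.succ_pos m⟩]
    exact (L.cst_cst (show p = p - ((0:ℕ):ℤ) by omega) (show q = q - ((0:ℕ):ℤ) by omega)
      (show p - ((0:ℕ):ℤ) = p by omega) (show q - ((0:ℕ):ℤ) = q by omega) y).trans
      (L.cst_rfl _ _ y)

theorem z_to_e {K L : Bicomplex R} (φ : BicomplexHom K L) (k : ℕ) (h : ZSurj φ k) :
    ESurj φ k := by
  intro p q y hy
  obtain ⟨x, hx, hfx⟩ := h p q y hy
  exact ⟨x, hx, by rw [hfx, sub_self]; exact isB_zero L k p q⟩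


theorem z_to_zw {K L : Bicomplex R} (φ : BicomplexHom K L) :
    ∀ k, (∀ j, j ≤ k → ZSurj φ j) → ZWSurj φ k := by
  intro k
  induction k with
  | zero =>
    intro h p q y
    obtain ⟨x, -, hx⟩ := h 0 le_rfl p q y trivial
    exact ⟨x, hx⟩
  | succ m IH =>
    intro h P Q b hb
    have hZWm : ZWSurj φ m := IH (fun j hj => h j (by omega))
    have hwit : IsWit L m P Q (ZWhd L b) (ZWtl L b) := isWit_hd_tl L hb
    obtain ⟨x, hxz, hfx⟩ := h (m+1) le_rfl P Q (ZWhd L b) ⟨ZWtl L b, hwit⟩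
    obtain ⟨s, hs⟩ := hxz
    -- the defect tuple
    have hc : IsZWT L m (P-1) (Q-1)
        (fun k => ZWtl L b k - φ.f (P-1-(k.1:ℤ)) (Q-1-(k.1:ℤ)) (s k)) := by
      constructor
      · intro hm
        show L.d0 (P-1-((0:ℕ):ℤ)) (Q-1-((0:ℕ):ℤ)) (P-1-((0:ℕ):ℤ)) (Q-1-((0:ℕ):ℤ)+1)
          (ZWtl L b ⟨0, hm⟩ - φ.f (P-1-((0:ℕ):ℤ)) (Q-1-((0:ℕ):ℤ)) (s ⟨0, hm⟩)) = 0
        rw [map_sub, ← hwit.2.2 hm, ← φ.comm0, ← hs.2.2 hm, φ.comm1, hfx, sub_self]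
      · intro k hk
        show L.d1 (P-1-((k:ℕ):ℤ)) (Q-1-((k:ℕ):ℤ)) (P-1-((k+1:ℕ):ℤ)) (Q-1-((k:ℕ):ℤ))
            (ZWtl L b ⟨k, Nat.lt_of_succ_lt hk⟩
              - φ.f (P-1-((k:ℕ):ℤ)) (Q-1-((k:ℕ):ℤ)) (s ⟨k, Nat.lt_of_succ_lt hk⟩))
          = L.d0 (P-1-((k+1:ℕ):ℤ)) (Q-1-((k+1:ℕ):ℤ)) (P-1-((k+1:ℕ):ℤ)) (Q-1-((k:ℕ):ℤ))
            (ZWtl L b ⟨k+1, hk⟩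
              - φ.f (P-1-((k+1:ℕ):ℤ)) (Q-1-((k+1:ℕ):ℤ)) (s ⟨k+1, hk⟩))
        rw [map_sub, map_sub, hwit.2.1 k hk, ← φ.comm1, hs.2.1 k hk, φ.comm0]
    -- lift the defect via `ZWSurj m`
    have hlift : ∀ c : ZWTuple L m (P-1) (Q-1), IsZWT L m (P-1) (Q-1) c →
        ∃ e : ZWTuple K m (P-1) (Q-1), IsZWT K m (P-1) (Q-1) e ∧
          ∀ k : Fin m, φ.f (P-1-(k.1:ℤ)) (Q-1-(k.1:ℤ)) (e k) = c k := by
      match m, hZWm with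
      | 0, _ =>
        intro c _
        exact ⟨fun k => k.elim0, ⟨fun hh => absurd hh (by omega), fun k hk => absurd hk (by omega)⟩,
          fun k => k.elim0⟩
      | n+1, hZW => intro c hc; exact hZW (P-1) (Q-1) c hc
    obtain ⟨e, he, hfe⟩ := hlift _ hc
    refine ⟨tupleOfWit K x (fun k => s k + e k), isZWT_tupleOfWit K ⟨hs.1, ?_, ?_⟩, ?_⟩
    · -- witness chain for s + e
      intro k hk
      show K.d1 (P-1-((k:ℕ):ℤ)) (Q-1-((k:ℕ):ℤ)) (P-1-((k+1:ℕ):ℤ)) (Q-1-((k:ℕ):ℤ))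
          (s ⟨k, Nat.lt_of_succ_lt hk⟩ + e ⟨k, Nat.lt_of_succ_lt hk⟩)
        = K.d0 (P-1-((k+1:ℕ):ℤ)) (Q-1-((k+1:ℕ):ℤ)) (P-1-((k+1:ℕ):ℤ)) (Q-1-((k:ℕ):ℤ))
          (s ⟨k+1, hk⟩ + e ⟨k+1, hk⟩)
      rw [map_add, map_add, hs.2.1 k hk, he.2 k hk]
    · intro hm
      show K.d1 P Q (P-1-((0:ℕ):ℤ)) (Q-1-((0:ℕ):ℤ)+1) x
        = K.d0 (P-1-((0:ℕ):ℤ)) (Q-1-((0:ℕ):ℤ)) (P-1-((0:ℕ):ℤ)) (Q-1-((0:ℕ):ℤ)+1)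
          (s ⟨0, hm⟩ + e ⟨0, hm⟩)
      rw [map_add, he.1 hm, add_zero]
      exact hs.2.2 hm
    · -- φ maps the constructed tuple to b
      intro k
      rcases k with ⟨kk, hk⟩
      match kk, hk with
      | 0, hk =>
        have e1 : φ.f (P - ((0:ℕ):ℤ)) (Q - ((0:ℕ):ℤ))
            (tupleOfWit K x (fun k => s k + e k) ⟨0, hk⟩)
            = L.cst (show P = P - ((0:ℕ):ℤ) by omega) (show Q = Q - ((0:ℕ):ℤ) by omega)
              (φ.f P Q x) := φ.f_cst _ _ _
        rw [e1, hfx]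
        exact (L.cst_cst (show P - ((0:ℕ):ℤ) = P by omega) (show Q - ((0:ℕ):ℤ) = Q by omega)
          (show P = P - ((0:ℕ):ℤ) by omega) (show Q = Q - ((0:ℕ):ℤ) by omega)
          (b ⟨0, Nat.succ_pos m⟩)).trans (L.cst_rfl _ _ _)
      | n+1, hk =>
        have e1 : φ.f (P - ((n+1:ℕ):ℤ)) (Q - ((n+1:ℕ):ℤ))
            (tupleOfWit K x (fun k => s k + e k) ⟨n+1, hk⟩)
            = L.cst (show P-1-((n:ℕ):ℤ) = P - ((n+1:ℕ):ℤ) by push_cast; ring)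
              (show Q-1-((n:ℕ):ℤ) = Q - ((n+1:ℕ):ℤ) by push_cast; ring)
              (φ.f (P-1-((n:ℕ):ℤ)) (Q-1-((n:ℕ):ℤ)) (s ⟨n, Nat.lt_of_succ_lt_succ hk⟩ + e ⟨n, Nat.lt_of_succ_lt_succ hk⟩)) :=
          φ.f_cst _ _ _
        rw [e1, map_add, hfe ⟨n, Nat.lt_of_succ_lt_succ hk⟩]
        have e2 : φ.f (P-1-((n:ℕ):ℤ)) (Q-1-((n:ℕ):ℤ)) (s ⟨n, Nat.lt_of_succ_lt_succ hk⟩)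
            + (ZWtl L b ⟨n, Nat.lt_of_succ_lt_succ hk⟩
              - φ.f (P-1-((n:ℕ):ℤ)) (Q-1-((n:ℕ):ℤ)) (s ⟨n, Nat.lt_of_succ_lt_succ hk⟩))
            = ZWtl L b ⟨n, Nat.lt_of_succ_lt_succ hk⟩ := by abel
        rw [e2]
        exact (L.cst_cst (show P - ((n+1:ℕ):ℤ) = P-1-((n:ℕ):ℤ) by push_cast; ring)
          (show Q - ((n+1:ℕ):ℤ) = Q-1-((n:ℕ):ℤ) by push_cast; ring)
          (show P-1-((n:ℕ):ℤ) = P - ((n+1:ℕ):ℤ) by push_cast; ring)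
          (show Q-1-((n:ℕ):ℤ) = Q - ((n+1:ℕ):ℤ) by push_cast; ring)
          (b ⟨n+1, hk⟩)).trans (L.cst_rfl _ _ _)


theorem e_to_z {K L : Bicomplex R} (φ : BicomplexHom K L) :
    ∀ k, (∀ j, j ≤ k → ESurj φ j) → ZSurj φ k := by
  intro k
  induction k using Nat.strong_induction_on with
  | _ k IH =>
    intro h
    match k, IH, h with
    | 0, IH, h =>
      intro p q y _
      obtain ⟨x, -, hB⟩ := h 0 le_rfl p q y trivial
      exact ⟨x, trivial, sub_eq_zero.mp hB⟩
    | 1, IH, h =>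
      intro p q y hy
      obtain ⟨x, hx, hB⟩ := h 1 le_rfl p q y hy
      obtain ⟨z, hz⟩ := hB
      have hZ0 : ZSurj φ 0 := IH 0 (by omega) (fun i hi => h i (by omega))
      obtain ⟨w, -, hw⟩ := hZ0 p (q-1) z trivial
      refine ⟨x - K.d0 p (q-1) p q w, ?_, ?_⟩
      · obtain ⟨t0, ht⟩ := hx
        refine ⟨fun k => k.elim0, ?_, ?_, ?_⟩
        · rw [map_sub, ht.1, K.gd0_sq rfl (by omega) w, sub_zero]
        · intro k hk
          exact absurd hk (by omega : ¬ (k + 1 < 0))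
        · intro hm
          exact absurd hm (lt_irrefl 0)
      · rw [map_sub, φ.comm0, hw, hz]
        exact sub_sub_cancel _ _
    | (m+2), IH, h =>
      intro p q y hy
      obtain ⟨x, hx, hB⟩ := h (m+2) le_rfl p q y hy
      obtain ⟨b, hb0, hbch, hbeq⟩ := hB
      have hZle : ∀ j, j ≤ m+1 → ZSurj φ j :=
        fun j hj => IH j (by omega) (fun i hi => h i (by omega))
      have hZW : ZWSurj φ (m+1) := z_to_zw φ (m+1) hZle
      have hb' : IsZWT L (m+1) (p+(m:ℤ)+1) (q+(m:ℤ))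
          (fun k => b ⟨k.1, Nat.lt_succ_of_lt k.2⟩) := by
        constructor
        · intro hm; exact hb0
        · intro k hk; exact hbch k (by omega)
      obtain ⟨a, haZ, haf⟩ := hZW (p+(m:ℤ)+1) (q+(m:ℤ)) _ hb'
      have hZ0 : ZSurj φ 0 := hZle 0 (by omega)
      obtain ⟨c, -, hc⟩ := hZ0 (p+(m:ℤ)+1 - ((m+1:ℕ):ℤ)) (q+(m:ℤ) - ((m+1:ℕ):ℤ))
        (b ⟨m+1, Nat.lt_succ_self (m+1)⟩) trivial
      refine ⟨x - (K.d0 (p+(m:ℤ)+1 - ((m+1:ℕ):ℤ)) (q+(m:ℤ) - ((m+1:ℕ):ℤ)) p q c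
          + K.d1 (p+(m:ℤ)+1 - ((m:ℕ):ℤ)) (q+(m:ℤ) - ((m:ℕ):ℤ)) p q
            (a ⟨m, Nat.lt_succ_self m⟩)), ?_, ?_⟩
      · apply isZ_sub K (m+2) p q hx
        refine ⟨(fun k => match k with
          | ⟨0, _⟩ => K.d1 (p+(m:ℤ)+1 - ((m+1:ℕ):ℤ)) (q+(m:ℤ) - ((m+1:ℕ):ℤ))
              (p-1-((0:ℕ):ℤ)) (q-1-((0:ℕ):ℤ)) c
          | ⟨n+1, _⟩ => 0), ?_, ?_, ?_⟩
        · -- d_0 u = 0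
          rw [map_add, K.gd0_sq (by push_cast; ring) (by push_cast; ring) c,
            K.gcomm (show (p:ℤ) = (p+(m:ℤ)+1 - ((m:ℕ):ℤ)) - 1 by push_cast; ring)
              (show (q:ℤ) = q+(m:ℤ) - ((m:ℕ):ℤ) by push_cast; ring) rfl rfl
              (a ⟨m, Nat.lt_succ_self m⟩),
            last_d0 K haZ _ _ p (q+1) rfl rfl, zero_add]
        · -- witness chain
          intro k hk
          match k, hk with
          | 0, hk =>
            show K.d1 (p-1-((0:ℕ):ℤ)) (q-1-((0:ℕ):ℤ)) (p-1-((0+1:ℕ):ℤ)) (q-1-((0:ℕ):ℤ))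
                (K.d1 (p+(m:ℤ)+1 - ((m+1:ℕ):ℤ)) (q+(m:ℤ) - ((m+1:ℕ):ℤ))
                  (p-1-((0:ℕ):ℤ)) (q-1-((0:ℕ):ℤ)) c)
              = K.d0 (p-1-((0+1:ℕ):ℤ)) (q-1-((0+1:ℕ):ℤ)) (p-1-((0+1:ℕ):ℤ)) (q-1-((0:ℕ):ℤ)) 0
            rw [K.gd1_sq (by push_cast; ring) (by push_cast; ring) c, map_zero]
          | n+1, hk =>
            show K.d1 (p-1-((n+1:ℕ):ℤ)) (q-1-((n+1:ℕ):ℤ)) (p-1-((n+1+1:ℕ):ℤ))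
                (q-1-((n+1:ℕ):ℤ)) 0
              = K.d0 (p-1-((n+1+1:ℕ):ℤ)) (q-1-((n+1+1:ℕ):ℤ)) (p-1-((n+1+1:ℕ):ℤ))
                (q-1-((n+1:ℕ):ℤ)) 0
            rw [map_zero, map_zero]
        · -- d_1 u = d_0 t_0
          intro hm
          rw [map_add, K.gd1_sq (show (p:ℤ) = (p+(m:ℤ)+1 - ((m:ℕ):ℤ)) - 1 by push_cast; ring)
              (show (q:ℤ) = q+(m:ℤ) - ((m:ℕ):ℤ) by push_cast; ring)
              (a ⟨m, Nat.lt_succ_self m⟩), add_zero,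
            ← K.gcomm (show p-1-((0:ℕ):ℤ) = (p+(m:ℤ)+1 - ((m+1:ℕ):ℤ)) - 1 by push_cast; ring)
              (show q-1-((0:ℕ):ℤ) = q+(m:ℤ) - ((m+1:ℕ):ℤ) by push_cast; ring)
              (show (p:ℤ) = p+(m:ℤ)+1 - ((m+1:ℕ):ℤ) by push_cast; ring)
              (show (q:ℤ) = (q+(m:ℤ) - ((m+1:ℕ):ℤ)) + 1 by push_cast; ring) c]
      · -- φ of the lift
        have hφu : φ.f p q (K.d0 (p+(m:ℤ)+1 - ((m+1:ℕ):ℤ)) (q+(m:ℤ) - ((m+1:ℕ):ℤ)) p q c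
            + K.d1 (p+(m:ℤ)+1 - ((m:ℕ):ℤ)) (q+(m:ℤ) - ((m:ℕ):ℤ)) p q
              (a ⟨m, Nat.lt_succ_self m⟩)) = φ.f p q x - y := by
          rw [map_add, φ.comm0, φ.comm1, hc, haf ⟨m, Nat.lt_succ_self m⟩]
          exact hbeq.symm
        rw [map_sub, hφu]
        exact sub_sub_cancel _ _

/-- For a morphism of bicomplexes, the following are equivalent: `ZW_k(f)` surjective for
all `k ≤ r`; `Z_k(f)` surjective for all `k ≤ r`; `E_k(f)` surjective for all `k ≤ r`. -/
theorem stmt12 {R : Type} [CommRing R] {K L : Bicomplex R} (φ : BicomplexHom K L) (r : ℕ) :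
    ((∀ k ≤ r, ZWSurj φ k) ↔ (∀ k ≤ r, ZSurj φ k)) ∧
    ((∀ k ≤ r, ZSurj φ k) ↔ (∀ k ≤ r, ESurj φ k)) := by
  constructor
  · constructor
    · intro h k hk
      exact zw_to_z φ k (h k hk)
    · intro h k hk
      exact z_to_zw φ k (fun j hj => h j (le_trans hj hk))
  · constructor
    · intro h k hk
      exact z_to_e φ k (h k hk)
    · intro h k hk
      exact e_to_z φ k (fun j hj => h j (le_trans hj hk))
end

section
/- Let f, g : A → B be morphisms of bicomplexes. If f and g are r-homotopic, then the induced maps E_{r+1}(f) and E_{r+1}(g) on the (r+1)-page of the column-filtration spectral sequences coincide. Equivalently (for r ≥ 1): if there are bigraded module maps h_i : A → B of bidegree (i, i−1), 1 ≤ i ≤ r, satisfying d_1h_{i+1} + (−1)^i h_{i+1}d_1 = d_0h_i + (−1)^i h_id_0 for 1 ≤ i ≤ r−1, (−1)^r d_0h_r + h_rd_0 = 0, and d_1h_1 + h_1d_1 = g − f, then E_{r+1}(f) = E_{r+1}(g). -/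
open scoped Classical

variable {R : Type} [CommRing R]

/-- A family of candidate homotopy operators: for each `i : ℕ`, a map of bidegree
`(i, i-1)` from `K` to `L`, encoded in "all indices" form. -/
def HFam (K L : Bicomplex R) :=
  ∀ (_ : ℕ) (i j i' j' : ℤ), K.X i j →ₗ[R] L.X i' j'

/-- `h` is an `r`-homotopy from `f` to `g` (in the unpacked form of Proposition 4.17
of the paper): for `r ≥ 1`, maps `h_i` of bidegree `(i,i-1)`, `1 ≤ i ≤ r`, with
`d_1 h_{i+1} + (-1)^i h_{i+1} d_1 = d_0 h_i + (-1)^i h_i d_0` for `1 ≤ i ≤ r-1`,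
`(-1)^r d_0 h_r + h_r d_0 = 0` and `d_1 h_1 + h_1 d_1 = g - f`.  For `r = 0`, a single
map `h` of bidegree `(0,-1)` with `d_0 h + h d_0 = g - f` and `h d_1 = d_1 h`. -/
def IsHtp {K L : Bicomplex R} (f g : BicomplexHom K L) (r : ℕ) (h : HFam K L) : Prop :=
  match r with
  | 0 =>
    (∀ n a b a' b', ¬(n = 0 ∧ a' = a ∧ b' = b - 1) → h n a b a' b' = 0) ∧
    (∀ a b x, L.d0 a (b-1) a b (h 0 a b a (b-1) x) +
        h 0 a (b+1) a b (K.d0 a b a (b+1) x) = g.f a b x - f.f a b x) ∧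
    (∀ a b x, L.d1 a (b-1) (a-1) (b-1) (h 0 a b a (b-1) x) =
        h 0 (a-1) b (a-1) (b-1) (K.d1 a b (a-1) b x))
  | r'+1 =>
    (∀ (n : ℕ) (a b a' b' : ℤ),
        ¬(1 ≤ n ∧ n ≤ r'+1 ∧ a' = a + (n:ℤ) ∧ b' = b + (n:ℤ) - 1) → h n a b a' b' = 0) ∧
    (∀ (i : ℕ), 1 ≤ i → i ≤ r' → ∀ (a b : ℤ) (x : K.X a b),
        L.d1 (a+(i:ℤ)+1) (b+(i:ℤ)) (a+(i:ℤ)) (b+(i:ℤ)) (h (i+1) a b (a+(i:ℤ)+1) (b+(i:ℤ)) x) +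
          (-1:R)^i • h (i+1) (a-1) b (a+(i:ℤ)) (b+(i:ℤ)) (K.d1 a b (a-1) b x) =
        L.d0 (a+(i:ℤ)) (b+(i:ℤ)-1) (a+(i:ℤ)) (b+(i:ℤ)) (h i a b (a+(i:ℤ)) (b+(i:ℤ)-1) x) +
          (-1:R)^i • h i a (b+1) (a+(i:ℤ)) (b+(i:ℤ)) (K.d0 a b a (b+1) x)) ∧
    (∀ (a b : ℤ) (x : K.X a b),
        (-1:R)^(r'+1) • L.d0 (a+(r'+1:ℕ)) (b+(r'+1:ℕ)-1) (a+(r'+1:ℕ)) (b+(r'+1:ℕ))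
            (h (r'+1) a b (a+(r'+1:ℕ)) (b+(r'+1:ℕ)-1) x) +
          h (r'+1) a (b+1) (a+(r'+1:ℕ)) (b+(r'+1:ℕ)) (K.d0 a b a (b+1) x) = 0) ∧
    (∀ (a b : ℤ) (x : K.X a b),
        L.d1 (a+1) b a b (h 1 a b (a+1) b x) + h 1 (a-1) b a b (K.d1 a b (a-1) b x) =
          g.f a b x - f.f a b x)

private lemma stmt15_neg_one_pow_smul_cancel {R : Type} [CommRing R] {M : Type}
    [AddCommGroup M] [Module R M] {n : ℕ} {z : M} (hz : (-1:R)^n • z = 0) : z = 0 := by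
  have h2 : ((-1:R)^n) • ((-1:R)^n • z) = 0 := by rw [hz, smul_zero]
  rwa [smul_smul, ← pow_add, Even.neg_one_pow ⟨n, rfl⟩, one_smul] at h2

/-- If `f, g : A → B` are `r`-homotopic (`r ≥ 1`, in the unpacked form: bigraded maps
`h_i` of bidegree `(i,i-1)`, `1 ≤ i ≤ r`, satisfying the listed identities), then
`E_{r+1}(f) = E_{r+1}(g)`: for every `(r+1)`-cycle `x`, `f(x) - g(x)` is an
`(r+1)`-boundary. -/
theorem stmt15 {R : Type} [CommRing R] {A B : Bicomplex R} (f g : BicomplexHom A B)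
    (r : ℕ) (hr : 1 ≤ r) (h : HFam A B) (hh : IsHtp f g r h) :
    ∀ p q x, IsZ A (r+1) p q x → IsB B (r+1) p q (f.f p q x - g.f p q x) := by
  obtain ⟨r', rfl⟩ : ∃ r'', r = r'' + 1 := ⟨r - 1, by omega⟩
  obtain ⟨hzero, hmid, htop, hbot⟩ := hh
  intro p q x hx
  obtain ⟨t, hd0x, hch, hd1x⟩ := hx
  -- totalized witness tuple
  obtain ⟨tt, htt⟩ : ∃ tt : ∀ l : ℕ, A.X (p-1-(l:ℤ)) (q-1-(l:ℤ)),
      tt = fun l => if hl : l < r'+1 then t ⟨l, hl⟩ else 0 := ⟨_, rfl⟩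
  have Htt : ∀ (l : ℕ) (hl : l < r'+1), tt l = t ⟨l, hl⟩ := by
    intro l hl; simp only [htt]; exact dif_pos hl
  -- generalized versions of the hypotheses
  have HZ0 : ∀ (a b a' b' : ℤ) (y : A.X a b), h 0 a b a' b' y = 0 := by
    intro a b a' b' y
    rw [hzero 0 a b a' b' (by omega)]; rfl
  have HMID : ∀ (i : ℕ), 1 ≤ i → i ≤ r' → ∀ (a b : ℤ) (y : A.X a b)
      (c1 c2 c2t c3s c3t c4 : ℤ),
      c1 = a+(i:ℤ)+1 → c2 = b+(i:ℤ) → c2t = b+(i:ℤ) → c3s = a+(i:ℤ) → c3t = a+(i:ℤ) →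
      c4 = b+(i:ℤ)-1 →
      B.d1 c1 c2 c3t c2t (h (i+1) a b c1 c2 y) +
        (-1:R)^i • h (i+1) (a-1) b c3t c2t (A.d1 a b (a-1) b y) =
      B.d0 c3s c4 c3t c2t (h i a b c3s c4 y) +
        (-1:R)^i • h i a (b+1) c3t c2t (A.d0 a b a (b+1) y) := by
    intro i h1 h2 a b y c1 c2 c2t c3s c3t c4 e1 e2 e3 e4 e5 e6
    subst e1; subst e2; subst e3; subst e4; subst e5; subst e6
    exact hmid i h1 h2 a b y
  have HTOP : ∀ (a b : ℤ) (y : A.X a b) (cs ds ct dt : ℤ),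
      cs = a+((r'+1:ℕ):ℤ) → ds = b+((r'+1:ℕ):ℤ)-1 → ct = a+((r'+1:ℕ):ℤ) →
      dt = b+((r'+1:ℕ):ℤ) →
      (-1:R)^(r'+1) • B.d0 cs ds ct dt (h (r'+1) a b cs ds y) +
        h (r'+1) a (b+1) ct dt (A.d0 a b a (b+1) y) = 0 := by
    intro a b y cs ds ct dt e1 e2 e3 e4
    subst e1; subst e2; subst e3; subst e4
    exact htop a b y
  have HBOT : ∀ (c1 c2 : ℤ), c1 = p+1 → c2 = q →
      B.d1 c1 c2 p q (h 1 p q c1 c2 x) + h 1 (p-1) q p q (A.d1 p q (p-1) q x) =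
        g.f p q x - f.f p q x := by
    intro c1 c2 e1 e2; subst e1; rw [e2]; exact hbot p q x
  have HCH : ∀ (l : ℕ), l + 1 ≤ r' → ∀ (c d : ℤ), c = p-1-(l:ℤ)-1 → d = q-1-(l:ℤ) →
      A.d1 (p-1-(l:ℤ)) (q-1-(l:ℤ)) c d (tt l) =
      A.d0 (p-1-((l+1:ℕ):ℤ)) (q-1-((l+1:ℕ):ℤ)) c d (tt (l+1)) := by
    intro l hl c d hc hd
    rw [show c = p-1-((l+1:ℕ):ℤ) by omega, hd, Htt l (by omega), Htt (l+1) (by omega)]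
    exact hch l (by omega)
  have HX2 : ∀ (c d : ℤ), c = p-1 → d = q →
      A.d1 p q c d x = A.d0 (p-1-((0:ℕ):ℤ)) (q-1-((0:ℕ):ℤ)) c d (tt 0) := by
    intro c d hc hd
    rw [show c = p-1-((0:ℕ):ℤ) by omega, show d = q-1-((0:ℕ):ℤ)+1 by omega,
      Htt 0 (by omega)]
    exact hd1x (by omega)
  have HG0 : ∀ (n : ℕ) (c d ct dt : ℤ), c = p-1 → d = q →
      h n c d ct dt (A.d1 p q c d x) =
      h n (p-1-((0:ℕ):ℤ)) (q-1-((0:ℕ):ℤ)+1) ct dt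
        (A.d0 (p-1-((0:ℕ):ℤ)) (q-1-((0:ℕ):ℤ)) (p-1-((0:ℕ):ℤ)) (q-1-((0:ℕ):ℤ)+1)
          (tt 0)) := by
    intro n c d ct dt hc hd
    rw [show c = p-1-((0:ℕ):ℤ) by omega, show d = q-1-((0:ℕ):ℤ)+1 by omega]
    rw [HX2 (p-1-((0:ℕ):ℤ)) (q-1-((0:ℕ):ℤ)+1) (by omega) (by omega)]
  have HGS : ∀ (n l : ℕ), l + 1 ≤ r' → ∀ (c d ct dt : ℤ),
      c = p-1-(l:ℤ)-1 → d = q-1-(l:ℤ) →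
      h n c d ct dt (A.d1 (p-1-(l:ℤ)) (q-1-(l:ℤ)) c d (tt l)) =
      h n (p-1-((l+1:ℕ):ℤ)) (q-1-((l+1:ℕ):ℤ)+1) ct dt
        (A.d0 (p-1-((l+1:ℕ):ℤ)) (q-1-((l+1:ℕ):ℤ)) (p-1-((l+1:ℕ):ℤ))
          (q-1-((l+1:ℕ):ℤ)+1) (tt (l+1))) := by
    intro n l hl c d ct dt hc hd
    rw [show c = p-1-((l+1:ℕ):ℤ) by omega, show d = q-1-((l+1:ℕ):ℤ)+1 by omega]
    rw [HCH l hl (p-1-((l+1:ℕ):ℤ)) (q-1-((l+1:ℕ):ℤ)+1) (by omega) (by omega)]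
  -- the boundary witness
  obtain ⟨BB, hBB⟩ : ∃ BB : ∀ k : ℕ, B.X (p+(r':ℤ)+1-(k:ℤ)) (q+(r':ℤ)-(k:ℤ)),
      BB = fun k => (if k = r'+1 then (-1:R) else 1) •
        (-(h (r'+1-k) p q (p+(r':ℤ)+1-(k:ℤ)) (q+(r':ℤ)-(k:ℤ)) x) +
          ∑ l ∈ Finset.range k, (-1:R)^l •
            h (r'+2-k+l) (p-1-(l:ℤ)) (q-1-(l:ℤ)) (p+(r':ℤ)+1-(k:ℤ)) (q+(r':ℤ)-(k:ℤ))
              (tt l)) := ⟨_, rfl⟩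
  refine ⟨fun k => BB k.1, ?_, ?_, ?_⟩
  · -- d0 of the top entry vanishes
    show B.d0 _ _ _ _ (BB 0) = 0
    simp only [hBB, Nat.sub_zero]
    rw [if_neg (show ¬(0 = r'+1) by omega)]
    simp only [one_smul, Finset.sum_range_zero, add_zero, map_neg, neg_eq_zero]
    have T0 := HTOP p q x (p+(r':ℤ)+1-((0:ℕ):ℤ)) (q+(r':ℤ)-((0:ℕ):ℤ))
      (p+(r':ℤ)+1-((0:ℕ):ℤ)) (q+(r':ℤ)-((0:ℕ):ℤ)+1) (by omega) (by omega) (by omega)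
      (by omega)
    rw [hd0x, map_zero, add_zero] at T0
    exact stmt15_neg_one_pow_smul_cancel T0
  · -- the chain conditions
    intro k hk
    show B.d1 _ _ _ _ (BB k) = B.d0 _ _ _ _ (BB (k+1))
    simp only [hBB]
    rw [if_neg (show ¬(k = r'+1) by omega), if_neg (show ¬(k+1 = r'+1) by omega)]
    simp only [one_smul]
    have n1 : r'+1-k = r'-k+1 := by omega
    have n2 : r'+1-(k+1) = r'-k := by omega
    have n3 : ∀ l:ℕ, r'+2-k+l = r'-k+1+l+1 := fun l => by omega
    have n4 : ∀ l:ℕ, r'+2-(k+1)+l = r'-k+1+l := fun l => by omega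
    simp only [n1, n2, n3, n4]
    simp only [map_add, map_neg, map_sum, map_smul]
    rw [Finset.sum_range_succ]
    rw [show r'-k+1+k = r'+1 by omega]
    obtain ⟨F, hF⟩ : ∃ F : ℕ → B.X (p+(r':ℤ)+1-((k+1:ℕ):ℤ)) (q+(r':ℤ)-(k:ℤ)),
        F = fun l => h (r'-k+1+l) (p-1-(l:ℤ)) (q-1-(l:ℤ)+1) (p+(r':ℤ)+1-((k+1:ℕ):ℤ))
          (q+(r':ℤ)-(k:ℤ))
          (A.d0 (p-1-(l:ℤ)) (q-1-(l:ℤ)) (p-1-(l:ℤ)) (q-1-(l:ℤ)+1) (tt l)) := ⟨_, rfl⟩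
    have SCAL : ∀ l:ℕ, (-1:R)^l * (-1:R)^(r'-k+1+l) = (-1:R)^(r'-k+1) := by
      intro l
      rw [pow_add, mul_left_comm, ← pow_add, Even.neg_one_pow ⟨l, rfl⟩, mul_one]
    have TEL : ∑ l ∈ Finset.range k,
          ((-1:R)^(r'-k+1) • F l - (-1:R)^(r'-k+1) • F (l+1))
        = (-1:R)^(r'-k+1) • F 0 - (-1:R)^(r'-k+1) • F k :=
      Finset.sum_range_sub' (fun l => (-1:R)^(r'-k+1) • F l) k
    have SUMEQ : (∑ l ∈ Finset.range k, (-1:R)^l •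
          B.d1 (p+(r':ℤ)+1-(k:ℤ)) (q+(r':ℤ)-(k:ℤ)) (p+(r':ℤ)+1-((k+1:ℕ):ℤ))
            (q+(r':ℤ)-(k:ℤ))
            (h (r'-k+1+l+1) (p-1-(l:ℤ)) (q-1-(l:ℤ)) (p+(r':ℤ)+1-(k:ℤ))
              (q+(r':ℤ)-(k:ℤ)) (tt l)))
        = (∑ l ∈ Finset.range k, (-1:R)^l •
            B.d0 (p+(r':ℤ)+1-((k+1:ℕ):ℤ)) (q+(r':ℤ)-((k+1:ℕ):ℤ))
              (p+(r':ℤ)+1-((k+1:ℕ):ℤ)) (q+(r':ℤ)-(k:ℤ))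
              (h (r'-k+1+l) (p-1-(l:ℤ)) (q-1-(l:ℤ)) (p+(r':ℤ)+1-((k+1:ℕ):ℤ))
                (q+(r':ℤ)-((k+1:ℕ):ℤ)) (tt l)))
          + ((-1:R)^(r'-k+1) • F 0 - (-1:R)^(r'-k+1) • F k) := by
      rw [← TEL, ← Finset.sum_add_distrib]
      refine Finset.sum_congr rfl ?_
      intro l hl
      rw [Finset.mem_range] at hl
      have E := HMID (r'-k+1+l) (by omega) (by omega) (p-1-(l:ℤ)) (q-1-(l:ℤ)) (tt l)
        (p+(r':ℤ)+1-(k:ℤ)) (q+(r':ℤ)-(k:ℤ)) (q+(r':ℤ)-(k:ℤ)) (p+(r':ℤ)+1-((k+1:ℕ):ℤ))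
        (p+(r':ℤ)+1-((k+1:ℕ):ℤ)) (q+(r':ℤ)-((k+1:ℕ):ℤ))
        (by omega) (by omega) (by omega) (by omega) (by omega) (by omega)
      rw [HGS (r'-k+1+l+1) l (by omega) (p-1-(l:ℤ)-1) (q-1-(l:ℤ))
        (p+(r':ℤ)+1-((k+1:ℕ):ℤ)) (q+(r':ℤ)-(k:ℤ)) rfl rfl] at E
      have E2 := congrArg (fun z => (-1:R)^l • z) E
      simp only [smul_add, smul_smul, SCAL l] at E2
      simp only [hF]
      rw [show r'-k+1+(l+1) = r'-k+1+l+1 by omega]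
      rw [add_sub, eq_sub_iff_add_eq]
      exact E2
    have XEQ := HMID (r'-k) (by omega) (by omega) p q x
      (p+(r':ℤ)+1-(k:ℤ)) (q+(r':ℤ)-(k:ℤ)) (q+(r':ℤ)-(k:ℤ)) (p+(r':ℤ)+1-((k+1:ℕ):ℤ))
      (p+(r':ℤ)+1-((k+1:ℕ):ℤ)) (q+(r':ℤ)-((k+1:ℕ):ℤ))
      (by omega) (by omega) (by omega) (by omega) (by omega) (by omega)
    rw [hd0x, map_zero, smul_zero, add_zero] at XEQ
    rw [HG0 (r'-k+1) (p-1) q (p+(r':ℤ)+1-((k+1:ℕ):ℤ)) (q+(r':ℤ)-(k:ℤ)) rfl rfl] at XEQ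
    have hF0 : F 0 = h (r'-k+1) (p-1-((0:ℕ):ℤ)) (q-1-((0:ℕ):ℤ)+1)
        (p+(r':ℤ)+1-((k+1:ℕ):ℤ)) (q+(r':ℤ)-(k:ℤ))
        (A.d0 (p-1-((0:ℕ):ℤ)) (q-1-((0:ℕ):ℤ)) (p-1-((0:ℕ):ℤ)) (q-1-((0:ℕ):ℤ)+1)
          (tt 0)) := by
      simp only [hF]
      try rw [show r'-k+1+0 = r'-k+1 by omega]
    have XEQ2 : B.d1 (p+(r':ℤ)+1-(k:ℤ)) (q+(r':ℤ)-(k:ℤ)) (p+(r':ℤ)+1-((k+1:ℕ):ℤ))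
        (q+(r':ℤ)-(k:ℤ)) (h (r'-k+1) p q (p+(r':ℤ)+1-(k:ℤ)) (q+(r':ℤ)-(k:ℤ)) x)
        = B.d0 (p+(r':ℤ)+1-((k+1:ℕ):ℤ)) (q+(r':ℤ)-((k+1:ℕ):ℤ)) (p+(r':ℤ)+1-((k+1:ℕ):ℤ))
            (q+(r':ℤ)-(k:ℤ))
            (h (r'-k) p q (p+(r':ℤ)+1-((k+1:ℕ):ℤ)) (q+(r':ℤ)-((k+1:ℕ):ℤ)) x)
          - (-1:R)^(r'-k) • F 0 := by
      rw [eq_sub_iff_add_eq, hF0]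
      exact XEQ
    have TK := HTOP (p-1-(k:ℤ)) (q-1-(k:ℤ)) (tt k)
      (p+(r':ℤ)+1-((k+1:ℕ):ℤ)) (q+(r':ℤ)-((k+1:ℕ):ℤ)) (p+(r':ℤ)+1-((k+1:ℕ):ℤ))
      (q+(r':ℤ)-(k:ℤ)) (by omega) (by omega) (by omega) (by omega)
    have hTK := eq_neg_of_add_eq_zero_right TK
    have hFk : F k = h (r'+1) (p-1-(k:ℤ)) (q-1-(k:ℤ)+1)
        (p+(r':ℤ)+1-((k+1:ℕ):ℤ)) (q+(r':ℤ)-(k:ℤ))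
        (A.d0 (p-1-(k:ℤ)) (q-1-(k:ℤ)) (p-1-(k:ℤ)) (q-1-(k:ℤ)+1) (tt k)) := by
      simp only [hF]
      rw [show r'-k+1+k = r'+1 by omega]
    have FINK : (-1:R)^(r'-k+1) • F k
        = -((-1:R)^k • B.d0 (p+(r':ℤ)+1-((k+1:ℕ):ℤ)) (q+(r':ℤ)-((k+1:ℕ):ℤ))
            (p+(r':ℤ)+1-((k+1:ℕ):ℤ)) (q+(r':ℤ)-(k:ℤ))
            (h (r'+1) (p-1-(k:ℤ)) (q-1-(k:ℤ)) (p+(r':ℤ)+1-((k+1:ℕ):ℤ))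
              (q+(r':ℤ)-((k+1:ℕ):ℤ)) (tt k))) := by
      rw [hFk, hTK, smul_neg, smul_smul, ← pow_add,
        show (r'-k+1)+(r'+1) = 2*(r'-k+1)+k by omega, pow_add, pow_mul, neg_one_sq,
        one_pow, one_mul]
    rw [SUMEQ, XEQ2, FINK]
    module
  · -- the value condition
    show f.f p q x - g.f p q x = B.d0 _ _ _ _ (BB (r'+1)) + B.d1 _ _ _ _ (BB r')
    simp only [hBB]
    simp only [if_true]
    rw [if_neg (show ¬(r' = r'+1) by omega)]
    simp only [one_smul]
    rw [show r'+1-(r'+1) = 0 by omega, show r'+1-r' = 1 by omega]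
    rw [HZ0 p q (p+(r':ℤ)+1-((r'+1:ℕ):ℤ)) (q+(r':ℤ)-((r'+1:ℕ):ℤ)) x]
    simp only [neg_zero, zero_add]
    have n5 : ∀ l:ℕ, r'+2-(r'+1)+l = l+1 := fun l => by omega
    have n6 : ∀ l:ℕ, r'+2-r'+l = l+1+1 := fun l => by omega
    simp only [n5, n6]
    simp only [map_add, map_neg, map_sum, map_smul]
    rw [Finset.sum_range_succ]
    obtain ⟨F', hF'⟩ : ∃ F' : ℕ → B.X p q,
        F' = fun l => h (l+1) (p-1-(l:ℤ)) (q-1-(l:ℤ)+1) p q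
          (A.d0 (p-1-(l:ℤ)) (q-1-(l:ℤ)) (p-1-(l:ℤ)) (q-1-(l:ℤ)+1) (tt l)) := ⟨_, rfl⟩
    have SCAL2 : ∀ l:ℕ, (-1:R)^l * (-1:R)^(l+1) = -1 := by
      intro l
      rw [pow_succ, ← mul_assoc, ← pow_add, Even.neg_one_pow ⟨l, rfl⟩, one_mul]
    have TEL : ∑ l ∈ Finset.range r', ((-1:R) • F' l - (-1:R) • F' (l+1))
        = (-1:R) • F' 0 - (-1:R) • F' r' :=
      Finset.sum_range_sub' (fun l => (-1:R) • F' l) r'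
    have SUMEQ : (∑ l ∈ Finset.range r', (-1:R)^l •
          B.d1 (p+(r':ℤ)+1-(r':ℤ)) (q+(r':ℤ)-(r':ℤ)) p q
            (h (l+1+1) (p-1-(l:ℤ)) (q-1-(l:ℤ)) (p+(r':ℤ)+1-(r':ℤ)) (q+(r':ℤ)-(r':ℤ))
              (tt l)))
        = (∑ l ∈ Finset.range r', (-1:R)^l •
            B.d0 (p+(r':ℤ)+1-((r'+1:ℕ):ℤ)) (q+(r':ℤ)-((r'+1:ℕ):ℤ)) p q
              (h (l+1) (p-1-(l:ℤ)) (q-1-(l:ℤ)) (p+(r':ℤ)+1-((r'+1:ℕ):ℤ))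
                (q+(r':ℤ)-((r'+1:ℕ):ℤ)) (tt l)))
          + ((-1:R) • F' 0 - (-1:R) • F' r') := by
      rw [← TEL, ← Finset.sum_add_distrib]
      refine Finset.sum_congr rfl ?_
      intro l hl
      rw [Finset.mem_range] at hl
      have E := HMID (l+1) (by omega) (by omega) (p-1-(l:ℤ)) (q-1-(l:ℤ)) (tt l)
        (p+(r':ℤ)+1-(r':ℤ)) (q+(r':ℤ)-(r':ℤ)) q (p+(r':ℤ)+1-((r'+1:ℕ):ℤ)) p
        (q+(r':ℤ)-((r'+1:ℕ):ℤ))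
        (by omega) (by omega) (by omega) (by omega) (by omega) (by omega)
      rw [HGS (l+1+1) l (by omega) (p-1-(l:ℤ)-1) (q-1-(l:ℤ)) p q rfl rfl] at E
      have E2 := congrArg (fun z => (-1:R)^l • z) E
      simp only [smul_add, smul_smul, SCAL2 l] at E2
      simp only [hF']
      rw [add_sub, eq_sub_iff_add_eq]
      exact E2
    have XB := HBOT (p+(r':ℤ)+1-(r':ℤ)) (q+(r':ℤ)-(r':ℤ)) (by omega) (by omega)
    rw [HG0 1 (p-1) q p q rfl rfl] at XB
    have hF'0 : F' 0 = h 1 (p-1-((0:ℕ):ℤ)) (q-1-((0:ℕ):ℤ)+1) p q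
        (A.d0 (p-1-((0:ℕ):ℤ)) (q-1-((0:ℕ):ℤ)) (p-1-((0:ℕ):ℤ)) (q-1-((0:ℕ):ℤ)+1)
          (tt 0)) := by
      simp only [hF']
      try rw [show (0:ℕ)+1 = 1 by omega]
    have XB2 : B.d1 (p+(r':ℤ)+1-(r':ℤ)) (q+(r':ℤ)-(r':ℤ)) p q
        (h 1 p q (p+(r':ℤ)+1-(r':ℤ)) (q+(r':ℤ)-(r':ℤ)) x)
        = g.f p q x - f.f p q x - F' 0 := by
      rw [hF'0]
      exact eq_sub_of_add_eq XB
    have TKF := HTOP (p-1-(r':ℤ)) (q-1-(r':ℤ)) (tt r')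
      (p+(r':ℤ)+1-((r'+1:ℕ):ℤ)) (q+(r':ℤ)-((r'+1:ℕ):ℤ)) p q
      (by omega) (by omega) (by omega) (by omega)
    have hTKF := eq_neg_of_add_eq_zero_right TKF
    have hF'r : F' r' = (-1:R)^(r') •
        B.d0 (p+(r':ℤ)+1-((r'+1:ℕ):ℤ)) (q+(r':ℤ)-((r'+1:ℕ):ℤ)) p q
          (h (r'+1) (p-1-(r':ℤ)) (q-1-(r':ℤ)) (p+(r':ℤ)+1-((r'+1:ℕ):ℤ))
            (q+(r':ℤ)-((r'+1:ℕ):ℤ)) (tt r')) := by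
      simp only [hF']
      rw [hTKF, pow_succ, mul_neg_one, neg_smul, neg_neg]
    rw [SUMEQ, XB2, hF'r]
    module
end
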